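/- Let A be a semisimple complex unital Banach algebra and x ∈ A. If tr(xa) = 0 for each a ∈ soc(A), then x·soc(A) = {0}. Moreover, if in addition x ∈ soc(A), then x = 0. -/

import Mathlib

open scoped ENNReal Classical

/-- The spectral rank of an element of a complex Banach algebra:
`rank a = sup_{x ∈ A} #(σ(xa) \ {0})`. -/
noncomputable def sRank {A : Type*} [NormedRing A] [NormedAlgebra ℂ A] (a : A) : ℕ∞ :=
  ⨆ x : A, ((spectrum ℂ (x * a)) \ {0}).encard

/-- The socle of a semisimple Banach algebra: the set of finite (spectral) rank elements. -/
def socle (A : Type*) [NormedRing A] [NormedAlgebra ℂ A] : Set A :=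
  {a : A | sRank a ≠ ⊤}

/-- The trace of an element of rank at most one: its unique nonzero spectral value,
or `0` if the spectrum is `{0}`. -/

noncomputable def trOne {A : Type*} [NormedRing A] [NormedAlgebra ℂ A] (a : A) : ℂ :=
  if h : ∃ μ : ℂ, (spectrum ℂ a) \ {0} = {μ} then h.choose else 0

open scoped NNReal

namespace ASZ

variable {A : Type*} [NormedRing A] [NormedAlgebra ℂ A]

section Ring

lemma mem_spec_swap {a b : A} {μ : ℂ} (hμ : μ ≠ 0) :
    μ ∈ spectrum ℂ (a * b) ↔ μ ∈ spectrum ℂ (b * a) := by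
  have := spectrum.unit_mem_mul_comm (R := ℂ) (a := a) (b := b) (r := Units.mk0 μ hμ)
  simpa using this

lemma spec_diff_swap (a b : A) :
    spectrum ℂ (a * b) \ {0} = spectrum ℂ (b * a) \ {0} := by
  ext μ
  simp only [Set.mem_diff, Set.mem_singleton_iff]
  exact and_congr_left fun hμ => mem_spec_swap hμ

lemma isUnit_of_mul_isUnit_both {u v : A} (h1 : IsUnit (u * v)) (h2 : IsUnit (v * u)) :
    IsUnit u := by
  set k := ((h1.unit⁻¹ : Aˣ) : A) with hk
  set k' := ((h2.unit⁻¹ : Aˣ) : A) with hk'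
  have e1 : (u * v) * k = 1 := by rw [← h1.unit_spec]; exact h1.unit.mul_inv
  have e2 : k' * (v * u) = 1 := by rw [← h2.unit_spec]; exact h2.unit.inv_mul
  have key : v * k = k' * v := by
    calc v * k = (k' * (v * u)) * (v * k) := by rw [e2, one_mul]
    _ = k' * (v * ((u * v) * k)) := by noncomm_ring
    _ = k' * v := by rw [e1, mul_one]
  exact ⟨⟨u, v * k, by rw [← mul_assoc, e1], by rw [key, mul_assoc, e2]⟩, rfl⟩

/-- spectrum of an idempotent is inside {0, 1} -/
lemma spec_idem_subset {q : A} (hq : q * q = q) :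
    spectrum ℂ q ⊆ {0, 1} := by
  intro z hz
  by_contra hz01
  simp only [Set.mem_insert_iff, Set.mem_singleton_iff, not_or] at hz01
  obtain ⟨hz0, hz1⟩ := hz01
  apply spectrum.notMem_iff.mpr ?_ hz
  have hM : algebraMap ℂ A z = z • (1 : A) := Algebra.algebraMap_eq_smul_one z
  set r : A := z⁻¹ • (1 : A) + (z * (z - 1))⁻¹ • q with hr
  have hzz1 : z * (z - 1) ≠ 0 := mul_ne_zero hz0 (sub_ne_zero.mpr hz1)
  have key : ∀ c : ℂ, (z • (1:A) - q) * (z⁻¹ • (1 : A) + c • q)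
      = 1 + (z * c - z⁻¹ - c) • q := by
    intro c
    have h9 : z • (1:A) * (c • q) = (z * c) • q := by
      rw [smul_mul_smul_comm, one_mul]
    have h10 : q * (c • q) = c • q := by rw [mul_smul_comm, hq]
    have h11 : q * (z⁻¹ • (1:A)) = z⁻¹ • q := by rw [mul_smul_comm, mul_one]
    have h12 : z • (1:A) * (z⁻¹ • (1:A)) = (z * z⁻¹) • (1:A) := by
      rw [smul_mul_smul_comm, one_mul]
    rw [sub_mul, mul_add, mul_add, h9, h10, h11, h12, mul_inv_cancel₀ hz0, one_smul]
    module
  have key2 : ∀ c : ℂ, (z⁻¹ • (1 : A) + c • q) * (z • (1:A) - q)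
      = 1 + (z * c - z⁻¹ - c) • q := by
    intro c
    have h9 : (c • q) * (z • (1:A)) = (z * c) • q := by
      rw [smul_mul_smul_comm, mul_one, mul_comm]
    have h10 : (c • q) * q = c • q := by rw [smul_mul_assoc, hq]
    have h11 : (z⁻¹ • (1:A)) * q = z⁻¹ • q := by rw [smul_mul_assoc, one_mul]
    have h12 : (z⁻¹ • (1:A)) * (z • (1:A)) = (z * z⁻¹) • (1:A) := by
      rw [smul_mul_smul_comm, one_mul, mul_comm]
    rw [add_mul, mul_sub, mul_sub, h9, h10, h11, h12, mul_inv_cancel₀ hz0, one_smul]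
    module
  have hc : z * (z * (z - 1))⁻¹ - z⁻¹ - (z * (z - 1))⁻¹ = 0 := by
    field_simp
    ring
  refine ⟨⟨algebraMap ℂ A z - q, r, ?_, ?_⟩, rfl⟩
  · rw [hM, hr, key, hc, zero_smul, add_zero]
  · rw [hM, hr, key2, hc, zero_smul, add_zero]

lemma one_mem_spec_idem {q : A} (hq : q * q = q) (h0 : q ≠ 0) :
    (1 : ℂ) ∈ spectrum ℂ q := by
  by_contra h
  rw [spectrum.notMem_iff] at h
  apply h0
  have h2 : (algebraMap ℂ A 1 - q) * q = 0 := by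
    rw [map_one, sub_mul, one_mul, hq, sub_self]
  have h3 : ((h.unit⁻¹ : Aˣ) : A) * ((algebraMap ℂ A 1 - q) * q) = 0 := by
    rw [h2, mul_zero]
  rw [← mul_assoc, h.val_inv_mul, one_mul] at h3
  exact h3

/-- orthogonal sum spectrum -/
lemma spec_add_orth {a b : A} (hab : a * b = 0) (hba : b * a = 0) {μ : ℂ} (hμ : μ ≠ 0) :
    μ ∈ spectrum ℂ (a + b) ↔ μ ∈ spectrum ℂ a ∨ μ ∈ spectrum ℂ b := by
  have hM : algebraMap ℂ A μ = μ • (1 : A) := Algebra.algebraMap_eq_smul_one μ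
  rw [← not_iff_not, not_or, spectrum.notMem_iff, spectrum.notMem_iff, spectrum.notMem_iff]
  constructor
  · intro h
    have hMu : IsUnit (algebraMap ℂ A μ) := (isUnit_iff_ne_zero.mpr hμ).map (algebraMap ℂ A)
    have hprod1 : (algebraMap ℂ A μ - a) * (algebraMap ℂ A μ - b)
        = algebraMap ℂ A μ * (algebraMap ℂ A μ - (a + b)) := by
      rw [sub_mul, mul_sub, mul_sub, hab, ← Algebra.commutes μ a, sub_zero, mul_sub, mul_add]
      abel
    have hprod2 : (algebraMap ℂ A μ - b) * (algebraMap ℂ A μ - a)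
        = algebraMap ℂ A μ * (algebraMap ℂ A μ - (a + b)) := by
      rw [sub_mul, mul_sub, mul_sub, hba, ← Algebra.commutes μ b, sub_zero, mul_sub, mul_add]
      abel
    have h1 : IsUnit ((algebraMap ℂ A μ - a) * (algebraMap ℂ A μ - b)) := by
      rw [hprod1]; exact hMu.mul h
    have h2 : IsUnit ((algebraMap ℂ A μ - b) * (algebraMap ℂ A μ - a)) := by
      rw [hprod2]; exact hMu.mul h
    exact ⟨isUnit_of_mul_isUnit_both h1 h2, isUnit_of_mul_isUnit_both h2 h1⟩
  · rintro ⟨ha, hb⟩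
    set ra := ((ha.unit⁻¹ : Aˣ) : A)
    set rb := ((hb.unit⁻¹ : Aˣ) : A)
    have hra1 : (algebraMap ℂ A μ - a) * ra = 1 := by
      rw [← ha.unit_spec]; exact ha.unit.mul_inv
    have hra2 : ra * (algebraMap ℂ A μ - a) = 1 := by
      rw [← ha.unit_spec]; exact ha.unit.inv_mul
    have hrb1 : (algebraMap ℂ A μ - b) * rb = 1 := by
      rw [← hb.unit_spec]; exact hb.unit.mul_inv
    have hrb2 : rb * (algebraMap ℂ A μ - b) = 1 := by
      rw [← hb.unit_spec]; exact hb.unit.inv_mul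
    -- b * ra = μ⁻¹ • b
    have hbra : b * ra = μ⁻¹ • b := by
      have h1 : b * (algebraMap ℂ A μ - a) = μ • b := by
        rw [mul_sub, hba, sub_zero, hM, mul_smul_comm, mul_one]
      calc b * ra = (μ⁻¹ • (μ • b)) * ra := by rw [smul_smul, inv_mul_cancel₀ hμ, one_smul]
        _ = μ⁻¹ • ((b * (algebraMap ℂ A μ - a)) * ra) := by rw [h1, smul_mul_assoc]
        _ = μ⁻¹ • b := by rw [mul_assoc, hra1, mul_one]
    have harb : a * rb = μ⁻¹ • a := by
      have h1 : a * (algebraMap ℂ A μ - b) = μ • a := by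
        rw [mul_sub, hab, sub_zero, hM, mul_smul_comm, mul_one]
      calc a * rb = (μ⁻¹ • (μ • a)) * rb := by rw [smul_smul, inv_mul_cancel₀ hμ, one_smul]
        _ = μ⁻¹ • ((a * (algebraMap ℂ A μ - b)) * rb) := by rw [h1, smul_mul_assoc]
        _ = μ⁻¹ • a := by rw [mul_assoc, hrb1, mul_one]
    have hrab : ra * b = μ⁻¹ • b := by
      have h1 : (algebraMap ℂ A μ - a) * b = μ • b := by
        rw [sub_mul, hab, sub_zero, hM, smul_mul_assoc, one_mul]
      calc ra * b = ra * (μ⁻¹ • (μ • b)) := by rw [smul_smul, inv_mul_cancel₀ hμ, one_smul]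
        _ = μ⁻¹ • (ra * ((algebraMap ℂ A μ - a) * b)) := by rw [h1, mul_smul_comm]
        _ = μ⁻¹ • b := by rw [← mul_assoc, hra2, one_mul]
    have hrba : rb * a = μ⁻¹ • a := by
      have h1 : (algebraMap ℂ A μ - b) * a = μ • a := by
        rw [sub_mul, hba, sub_zero, hM, smul_mul_assoc, one_mul]
      calc rb * a = rb * (μ⁻¹ • (μ • a)) := by rw [smul_smul, inv_mul_cancel₀ hμ, one_smul]
        _ = μ⁻¹ • (rb * ((algebraMap ℂ A μ - b) * a)) := by rw [h1, mul_smul_comm]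
        _ = μ⁻¹ • a := by rw [← mul_assoc, hrb2, one_mul]
    set r : A := ra + rb - μ⁻¹ • 1
    have hsub : algebraMap ℂ A μ - (a + b) = (algebraMap ℂ A μ - a) - b := by rw [sub_sub]
    have hMinv : (algebraMap ℂ A μ - (a + b)) * (μ⁻¹ • (1:A)) = 1 - μ⁻¹ • a - μ⁻¹ • b := by
      rw [mul_smul_comm, mul_one, smul_sub, hM, smul_smul, inv_mul_cancel₀ hμ, one_smul,
        smul_add, ← sub_sub]
    have hMinv2 : (μ⁻¹ • (1:A)) * (algebraMap ℂ A μ - (a + b)) = 1 - μ⁻¹ • a - μ⁻¹ • b := by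
      rw [smul_mul_assoc, one_mul, smul_sub, hM, smul_smul, inv_mul_cancel₀ hμ, one_smul,
        smul_add, ← sub_sub]
    refine ⟨⟨algebraMap ℂ A μ - (a + b), r, ?_, ?_⟩, rfl⟩
    · have e1 : (algebraMap ℂ A μ - (a + b)) * ra = 1 - μ⁻¹ • b := by
        rw [hsub, sub_mul, hra1, hbra]
      have e2 : (algebraMap ℂ A μ - (a + b)) * rb = 1 - μ⁻¹ • a := by
        rw [show algebraMap ℂ A μ - (a + b) = (algebraMap ℂ A μ - b) - a by rw [sub_sub, add_comm],
          sub_mul, hrb1, harb]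
      calc (algebraMap ℂ A μ - (a + b)) * r
          = (algebraMap ℂ A μ - (a + b)) * ra + (algebraMap ℂ A μ - (a + b)) * rb
            - (algebraMap ℂ A μ - (a + b)) * (μ⁻¹ • 1) := by rw [mul_sub, mul_add]
        _ = (1 - μ⁻¹ • b) + (1 - μ⁻¹ • a) - (1 - μ⁻¹ • a - μ⁻¹ • b) := by
            rw [e1, e2, hMinv]
        _ = 1 := by abel
    · have e1 : ra * (algebraMap ℂ A μ - (a + b)) = 1 - μ⁻¹ • b := by
        rw [hsub, mul_sub, hra2, hrab]
      have e2 : rb * (algebraMap ℂ A μ - (a + b)) = 1 - μ⁻¹ • a := by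
        rw [show algebraMap ℂ A μ - (a + b) = (algebraMap ℂ A μ - b) - a by rw [sub_sub, add_comm],
          mul_sub, hrb2, hrba]
      calc r * (algebraMap ℂ A μ - (a + b))
          = ra * (algebraMap ℂ A μ - (a + b)) + rb * (algebraMap ℂ A μ - (a + b))
            - (μ⁻¹ • 1) * (algebraMap ℂ A μ - (a + b)) := by rw [sub_mul, add_mul]
        _ = (1 - μ⁻¹ • b) + (1 - μ⁻¹ • a) - (1 - μ⁻¹ • a - μ⁻¹ • b) := by
            rw [e1, e2, hMinv2]
        _ = 1 := by abel
end Ring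

end ASZ

namespace ASZ
section SR
variable {A : Type*} [NormedRing A] [NormedAlgebra ℂ A]

lemma encard_le_sRank (z a : A) :
    ((spectrum ℂ (z * a)) \ {0}).encard ≤ sRank a :=
  le_iSup (fun x : A => ((spectrum ℂ (x * a)) \ {0}).encard) z

lemma encard_self_le_sRank (a : A) :
    ((spectrum ℂ a) \ {0}).encard ≤ sRank a := by
  simpa using encard_le_sRank 1 a

lemma sRank_mul_right (a u : A) : sRank (a * u) ≤ sRank a := by
  refine iSup_le fun z => ?_
  have h1 : spectrum ℂ (z * (a * u)) \ {0} = spectrum ℂ ((u * z) * a) \ {0} := by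
    rw [show z * (a * u) = (z * a) * u by rw [mul_assoc], spec_diff_swap (z * a) u,
      ← mul_assoc]
  rw [h1]
  exact encard_le_sRank (u * z) a

lemma sRank_mul_left (a u : A) : sRank (u * a) ≤ sRank a := by
  refine iSup_le fun z => ?_
  rw [show z * (u * a) = (z * u) * a by rw [mul_assoc]]
  exact encard_le_sRank (z * u) a

lemma rad_zero (hA : Ideal.jacobson (⊥ : Ideal A) = ⊥) (u : A)
    (hu : ∀ y : A, spectrum ℂ (u * y) ⊆ {0}) : u = 0 := by
  have hmem : u ∈ Ideal.jacobson (⊥ : Ideal A) := by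
    rw [Ideal.mem_jacobson_iff]
    intro y
    have h1 : (1 : ℂ) ∉ spectrum ℂ ((-y) * u) := by
      intro hc
      have := (mem_spec_swap (one_ne_zero)).mp hc
      exact one_ne_zero (Set.mem_singleton_iff.mp (hu (-y) this))
    rw [spectrum.notMem_iff, map_one] at h1
    refine ⟨((h1.unit⁻¹ : Aˣ) : A), ?_⟩
    have key : ((h1.unit⁻¹ : Aˣ) : A) * (1 - (-y) * u) = 1 := h1.val_inv_mul
    have : ((h1.unit⁻¹ : Aˣ) : A) * y * u + ((h1.unit⁻¹ : Aˣ) : A) - 1 = 0 := by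
      have h2 : ((h1.unit⁻¹ : Aˣ) : A) * (1 - (-y) * u)
          = ((h1.unit⁻¹ : Aˣ) : A) * y * u + ((h1.unit⁻¹ : Aˣ) : A) := by
        noncomm_ring
      rw [h2] at key
      rw [key, sub_self]
    rw [this]
    exact Submodule.zero_mem ⊥
  rw [hA] at hmem
  exact (Submodule.mem_bot A).mp hmem

lemma superadd {p q w : A} (hp : p * p = p) (hq : q * q = q) (hpq : p * q = 0)
    (hqp : q * p = 0) (hq0 : q ≠ 0) (hfin : (spectrum ℂ (w * p) \ {0}).Finite) :
    (spectrum ℂ (w * p) \ {0}).encard + 1 ≤ sRank (p + q) := by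
  obtain ⟨t, ht⟩ := ((hfin.union (Set.finite_singleton 0)).infinite_compl).nonempty
  rw [Set.mem_compl_iff, Set.mem_union, Set.mem_singleton_iff, not_or] at ht
  obtain ⟨htS, ht0⟩ := ht
  set a₁ := p * w * p with ha₁
  have hspec_a₁ : spectrum ℂ a₁ \ {0} = spectrum ℂ (w * p) \ {0} := by
    rw [ha₁, spec_diff_swap (p * w) p, ← mul_assoc, hp, spec_diff_swap p w]
  have horth1 : a₁ * (t • q) = 0 := by
    rw [mul_smul_comm, ha₁, mul_assoc (p * w) p q, hpq, mul_zero, smul_zero]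
  have horth2 : (t • q) * a₁ = 0 := by
    rw [smul_mul_assoc, ha₁, ← mul_assoc, ← mul_assoc, hqp, zero_mul, zero_mul, smul_zero]
  set Z := a₁ + t • q with hZdef
  have hZ : Z * (p + q) = Z := by
    rw [hZdef, add_mul, mul_add, mul_add, ha₁]
    rw [mul_assoc (p * w) p p, hp, mul_assoc (p * w) p q, hpq, mul_zero, add_zero]
    rw [smul_mul_assoc, smul_mul_assoc, hqp, smul_zero, zero_add, hq]
  have hspecZ : spectrum ℂ Z \ {0} = (spectrum ℂ a₁ \ {0}) ∪ (spectrum ℂ (t • q) \ {0}) := by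
    ext μ
    simp only [Set.mem_diff, Set.mem_union, Set.mem_singleton_iff]
    constructor
    · rintro ⟨hμ, hμ0⟩
      rcases (spec_add_orth horth1 horth2 hμ0).mp hμ with h | h
      · exact Or.inl ⟨h, hμ0⟩
      · exact Or.inr ⟨h, hμ0⟩
    · rintro (⟨hμ, hμ0⟩ | ⟨hμ, hμ0⟩)
      · exact ⟨(spec_add_orth horth1 horth2 hμ0).mpr (Or.inl hμ), hμ0⟩
      · exact ⟨(spec_add_orth horth1 horth2 hμ0).mpr (Or.inr hμ), hμ0⟩
  have hspec_tq : spectrum ℂ (t • q) \ {0} = {t} := by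
    apply Set.eq_singleton_iff_unique_mem.mpr
    constructor
    · refine ⟨?_, ht0⟩
      have h1 := spectrum.smul_mem_smul_iff (r := Units.mk0 t ht0) (a := q) (s := (1:ℂ))
      rw [Units.smul_def, Units.smul_def] at h1
      simp only [Units.val_mk0, smul_eq_mul, mul_one] at h1
      exact h1.mpr (one_mem_spec_idem hq hq0)
    · rintro z ⟨hz, hz0⟩
      rw [Set.mem_singleton_iff] at hz0
      have h2 : ((t⁻¹ * z) : ℂ) ∈ spectrum ℂ q := by
        have h1 := spectrum.smul_mem_smul_iff (r := Units.mk0 t ht0) (a := q)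
          (s := (t⁻¹ * z : ℂ))
        rw [Units.smul_def, Units.smul_def] at h1
        simp only [Units.val_mk0, smul_eq_mul] at h1
        rw [show t * (t⁻¹ * z) = z by rw [← mul_assoc, mul_inv_cancel₀ ht0, one_mul]] at h1
        exact h1.mp hz
      rcases spec_idem_subset hq h2 with h3 | h3
      · exact absurd ((mul_eq_zero.mp h3).resolve_left (inv_ne_zero ht0)) hz0
      · rw [Set.mem_singleton_iff] at h3
        field_simp at h3
        exact h3
  have hcount : spectrum ℂ Z \ {0} = insert t (spectrum ℂ (w * p) \ {0}) := by
    rw [hspecZ, hspec_a₁, hspec_tq, Set.union_singleton]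
  calc (spectrum ℂ (w * p) \ {0}).encard + 1
      = (insert t (spectrum ℂ (w * p) \ {0})).encard := (Set.encard_insert_of_notMem htS).symm
    _ = (spectrum ℂ Z \ {0}).encard := by rw [hcount]
    _ = (spectrum ℂ (Z * (p + q)) \ {0}).encard := by rw [hZ]
    _ ≤ sRank (p + q) := encard_le_sRank Z (p + q)

end SR
end ASZ

namespace ASZ

noncomputable def bc : ℕ → ℂ
  | 0 => 1
  | n+1 => bc n * ((1/2 - n) / (n+1))

lemma bc_zero : bc 0 = 1 := rfl

lemma cast_succ_ne_zero (n : ℕ) : ((n : ℂ) + 1) ≠ 0 := by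
  have h : ((n+1 : ℕ) : ℂ) ≠ 0 := Nat.cast_ne_zero.mpr (Nat.succ_ne_zero n)
  push_cast at h
  exact h

lemma bc_rec (n : ℕ) : ((n : ℂ) + 1) * bc (n+1) = (1/2 - n) * bc n := by
  have hn : ((n : ℂ) + 1) ≠ 0 := cast_succ_ne_zero n
  show ((n : ℂ) + 1) * (bc n * ((1/2 - n) / (n+1))) = (1/2 - n) * bc n
  field_simp

lemma bc_norm_le_one : ∀ n, ‖bc n‖ ≤ 1 := by
  intro n
  induction n with
  | zero => simp [bc_zero]
  | succ n ih =>
    show ‖bc n * ((1/2 - n) / (n+1))‖ ≤ 1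
    rw [norm_mul]
    have h1 : ‖((1:ℂ)/2 - n) / (n+1)‖ ≤ 1 := by
      rw [norm_div]
      have e1 : ((1:ℂ)/2 - n) = (((1:ℝ)/2 - n : ℝ) : ℂ) := by push_cast; ring
      have e2 : ((n:ℂ) + 1) = (((n:ℝ) + 1 : ℝ) : ℂ) := by push_cast; ring
      rw [e1, e2, Complex.norm_real, Complex.norm_real, Real.norm_eq_abs, Real.norm_eq_abs,
        abs_of_pos (by positivity : (0:ℝ) < (n:ℝ) + 1), div_le_one (by positivity)]
      have habs : |(1:ℝ)/2 - n| ≤ 1/2 + n := by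
        calc |(1:ℝ)/2 - n| ≤ |(1:ℝ)/2| + |(n:ℝ)| := abs_sub _ _
          _ = 1/2 + n := by
            rw [abs_of_pos (by norm_num : (0:ℝ) < 1/2), abs_of_nonneg (Nat.cast_nonneg n)]
      linarith
    have := mul_le_mul ih h1 (norm_nonneg _) zero_le_one
    simpa using this

noncomputable def Sconv (n : ℕ) : ℂ := ∑ k ∈ Finset.range (n+1), bc k * bc (n-k)

lemma refl_eq (m : ℕ) :
    ∑ k ∈ Finset.range (m+1), ((m-k : ℕ) : ℂ) * (bc k * bc (m-k))
      = ∑ k ∈ Finset.range (m+1), (k : ℂ) * (bc k * bc (m-k)) := by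
  have h := Finset.sum_range_reflect (fun k => (k : ℂ) * (bc k * bc (m-k))) (m+1)
  rw [← h]
  apply Finset.sum_congr rfl
  intro k hk
  rw [Finset.mem_range] at hk
  have hk' : k ≤ m := Nat.lt_succ_iff.mp hk
  have e1 : m + 1 - 1 - k = m - k := by omega
  have e2 : m - (m - k) = k := Nat.sub_sub_self hk'
  rw [e1, e2]
  ring

lemma Sconv_succ (n : ℕ) : ((n : ℂ) + 1) * Sconv (n+1) = (1 - n) * Sconv n := by
  have key : ((n : ℂ) + 1) * Sconv (n+1)
      = 2 * ∑ k ∈ Finset.range (n+2), (k : ℂ) * (bc k * bc (n+1-k)) := by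
    rw [Sconv, Finset.mul_sum, two_mul]
    nth_rewrite 2 [← refl_eq (n+1)]
    rw [← Finset.sum_add_distrib]
    apply Finset.sum_congr rfl
    intro k hk
    rw [Finset.mem_range] at hk
    have hk' : k ≤ n + 1 := Nat.lt_succ_iff.mp hk
    have e1 : ((n+1-k : ℕ) : ℂ) = ((n:ℂ) + 1) - k := by
      push_cast [Nat.cast_sub hk']
      ring
    rw [e1]
    ring
  have key2 : ∑ k ∈ Finset.range (n+2), (k : ℂ) * (bc k * bc (n+1-k))
      = ∑ k ∈ Finset.range (n+1), (1/2 - (k:ℂ)) * (bc k * bc (n-k)) := by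
    rw [Finset.sum_range_succ' (fun k => (k : ℂ) * (bc k * bc (n+1-k))) (n+1)]
    simp only [Nat.cast_zero, zero_mul, add_zero, Nat.cast_add, Nat.cast_one]
    apply Finset.sum_congr rfl
    intro k hk
    have e1 : n + 1 - (k+1) = n - k := by omega
    rw [e1]
    have e2 : ((k:ℂ) + 1) * bc (k+1) = (1/2 - k) * bc k := bc_rec k
    calc ((k:ℂ) + 1) * (bc (k+1) * bc (n-k)) = (((k:ℂ) + 1) * bc (k+1)) * bc (n-k) := by ring
      _ = ((1/2 - (k:ℂ)) * bc k) * bc (n-k) := by rw [e2]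
      _ = (1/2 - (k:ℂ)) * (bc k * bc (n-k)) := by ring
  have key3 : ∑ k ∈ Finset.range (n+1), ((k:ℂ)) * (bc k * bc (n-k))
      + ∑ k ∈ Finset.range (n+1), ((k:ℂ)) * (bc k * bc (n-k)) = (n : ℂ) * Sconv n := by
    nth_rewrite 1 [← refl_eq n]
    rw [← Finset.sum_add_distrib, Sconv, Finset.mul_sum]
    apply Finset.sum_congr rfl
    intro k hk
    rw [Finset.mem_range] at hk
    have hk' : k ≤ n := Nat.lt_succ_iff.mp hk
    have e1 : ((n-k : ℕ) : ℂ) = (n:ℂ) - k := by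
      push_cast [Nat.cast_sub hk']
      ring
    rw [e1]
    ring
  rw [key, key2]
  have expand : (2:ℂ) * ∑ k ∈ Finset.range (n+1), (1/2 - (k:ℂ)) * (bc k * bc (n-k))
      = Sconv n - ((n:ℂ)) * Sconv n := by
    rw [← key3, Sconv]
    rw [Finset.mul_sum]
    rw [← Finset.sum_add_distrib, ← Finset.sum_sub_distrib]
    apply Finset.sum_congr rfl
    intro k hk
    ring
  rw [expand]
  ring

lemma Sconv_val (n : ℕ) : Sconv n = if n = 0 then 1 else if n = 1 then 1 else 0 := by
  induction n with
  | zero => simp [Sconv, bc_zero]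
  | succ n ih =>
    have h := Sconv_succ n
    have hn : ((n : ℂ) + 1) ≠ 0 := cast_succ_ne_zero n
    by_cases h0 : n = 0
    · subst h0
      simp only [Nat.cast_zero, zero_add, one_mul, sub_zero] at h
      simp only [if_neg one_ne_zero, if_pos rfl, Nat.zero_add]
      rw [h]
      simpa using ih
    · by_cases h1 : n = 1
      · subst h1
        rw [if_neg one_ne_zero, if_pos rfl] at ih
        simp only [Nat.cast_one] at h
        rw [ih, sub_self, zero_mul] at h
        have h2 : Sconv (1+1) = 0 := by
          rcases mul_eq_zero.mp h with hc | hc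
          · exact absurd hc (by norm_num)
          · exact hc
        rw [h2, if_neg (by norm_num : ¬(1+1 = 0)), if_neg (by norm_num : ¬(1+1 = 1))]
      · rw [if_neg h0, if_neg h1] at ih
        rw [ih, mul_zero] at h
        have hz : Sconv (n+1) = 0 := by
          rcases mul_eq_zero.mp h with hc | hc
          · exact absurd hc hn
          · exact hc
        rw [hz, if_neg (Nat.succ_ne_zero n), if_neg (by omega : n + 1 ≠ 1)]

end ASZ

namespace ASZ
section Bicomm
variable {A : Type*} [NormedRing A] [NormedAlgebra ℂ A]

/-- the bicommutant of a single element -/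
def Bic (b : A) : Subalgebra ℂ A :=
  Subalgebra.centralizer ℂ ((Subalgebra.centralizer ℂ {b} : Subalgebra ℂ A) : Set A)

lemma mem_Bic_iff {b u : A} : u ∈ Bic b ↔ ∀ c : A, b * c = c * b → c * u = u * c := by
  rw [Bic, Subalgebra.mem_centralizer_iff]
  constructor
  · intro h c hc
    refine h c ?_
    rw [SetLike.mem_coe, Subalgebra.mem_centralizer_iff]
    intro g hg
    rw [Set.mem_singleton_iff] at hg
    subst hg
    exact hc
  · intro h c hc
    rw [SetLike.mem_coe, Subalgebra.mem_centralizer_iff] at hc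
    exact h c (hc b (Set.mem_singleton b))

lemma self_mem_Bic (b : A) : b ∈ Bic b :=
  mem_Bic_iff.mpr fun _ hc => hc.symm

lemma Bic_comm {b : A} {u v : A} (hu : u ∈ Bic b) (hv : v ∈ Bic b) : u * v = v * u := by
  have hvb : b * v = v * b := mem_Bic_iff.mp hv b rfl
  exact (mem_Bic_iff.mp hu v hvb).symm

lemma Bic_closed (b : A) : IsClosed ((Bic b : Set A)) := by
  have heq : (Bic b : Set A) =
      ⋂ c ∈ ((Subalgebra.centralizer ℂ ({b} : Set A) : Subalgebra ℂ A) : Set A),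
        {u : A | c * u = u * c} := by
    ext u
    simp only [Set.mem_iInter, Set.mem_setOf_eq, SetLike.mem_coe]
    exact ⟨fun h c hc => (Subalgebra.mem_centralizer_iff ℂ).mp h c hc,
      fun h => (Subalgebra.mem_centralizer_iff ℂ).mpr fun c hc => h c hc⟩
  rw [heq]
  exact isClosed_biInter fun c _ =>
    isClosed_eq (continuous_mul_left c) (continuous_mul_right c)

lemma Bic_isUnit {b : A} (u : (Bic b)) (hu : IsUnit (u : A)) : IsUnit u := by
  set r : A := ((hu.unit⁻¹ : Aˣ) : A) with hrdef
  have hr1 : (u : A) * r = 1 := hu.mul_val_inv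
  have hr2 : r * (u : A) = 1 := hu.val_inv_mul
  have hrmem : r ∈ Bic b := by
    rw [mem_Bic_iff]
    intro c hc
    have hcu : c * (u : A) = (u : A) * c := mem_Bic_iff.mp u.2 c hc
    calc c * r = (r * (u : A)) * (c * r) := by rw [hr2, one_mul]
      _ = r * (((u : A) * c) * r) := by noncomm_ring
      _ = r * ((c * (u : A)) * r) := by rw [hcu]
      _ = r * (c * ((u : A) * r)) := by noncomm_ring
      _ = r * c := by rw [hr1, mul_one]
  refine ⟨⟨u, ⟨r, hrmem⟩, ?_, ?_⟩, rfl⟩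
  · exact Subtype.ext hr1
  · exact Subtype.ext hr2

lemma Bic_spec {b : A} (u : (Bic b)) : spectrum ℂ u = spectrum ℂ (u : A) := by
  apply Set.eq_of_subset_of_subset ?_ (spectrum.subset_subalgebra u)
  intro z hz
  by_contra hzA
  rw [spectrum.notMem_iff] at hzA
  apply spectrum.notMem_iff.mpr ?_ hz
  have hcoe : ((algebraMap ℂ (Bic b) z - u : (Bic b)) : A) = algebraMap ℂ A z - (u : A) := by
    push_cast
    rfl
  apply Bic_isUnit
  rw [hcoe]
  exact hzA

end Bicomm
end ASZ

namespace ASZ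
section Machine
open Polynomial WeakDual
variable {A : Type*} [NormedRing A] [NormedAlgebra ℂ A] [CompleteSpace A]

set_option maxHeartbeats 1000000 in
set_option synthInstance.maxHeartbeats 1000000 in
lemma machine [Nontrivial A] (b : A) (hfin : (spectrum ℂ b \ {0}).Finite) :
    ∃ F : ℂ → A, ∀ μ, μ ∈ spectrum ℂ b \ {0} →
      ((∃ h : A, F μ = b * h) ∧ F μ * F μ = F μ ∧ F μ ≠ 0 ∧
        ∀ ν ∈ spectrum ℂ b \ {0}, ν ≠ μ → F μ * F ν = 0) := by
  classical
  letI instCS : CompleteSpace (Bic b) := (Bic_closed b).completeSpace_coe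
  letI instNCR : NormedCommRing (Bic b) :=
    { (inferInstance : NormedRing (Bic b)) with
      mul_comm := fun u v => Subtype.ext (Bic_comm u.2 v.2) }
  haveI : Nontrivial (Bic b) := ⟨⟨0, 1, fun hc => (zero_ne_one : (0:A) ≠ 1) (by
    have h' := congrArg (Subtype.val) hc
    simpa using h')⟩⟩
  set β : (Bic b) := ⟨b, self_mem_Bic b⟩ with hβdef
  have hspecβ : spectrum ℂ β = spectrum ℂ b := Bic_spec β
  set T : Finset ℂ := insert (0:ℂ) hfin.toFinset with hTdef
  have hsubT : spectrum ℂ b ⊆ ↑T := by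
    intro z hz
    by_cases hz0 : z = 0
    · subst hz0; exact Finset.mem_insert_self 0 _
    · exact Finset.mem_insert_of_mem (hfin.mem_toFinset.mpr ⟨hz, hz0⟩)
  -- the per-point construction
  have claim : ∀ μ ∈ spectrum ℂ b \ {0}, ∃ q : (Bic b), (∃ h : (Bic b), q = β * h) ∧
      q * q = q ∧ (∀ φ : characterSpace ℂ (Bic b), φ q = if φ β = μ then 1 else 0) := by
    intro μ hμmem
    obtain ⟨hμspec, hμ0'⟩ := hμmem
    have hμ0 : μ ≠ 0 := hμ0'
    have hμT : μ ∈ T := hsubT hμspec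
    set P : ℂ[X] := Lagrange.interpolate T id (fun t => if t = μ then 1 else 0) with hPdef
    have hPnode : ∀ t ∈ T, P.eval t = if t = μ then 1 else 0 := by
      intro t ht
      exact Lagrange.eval_interpolate_at_node _ (Set.injOn_id _) ht
    have hP0 : P.eval 0 = 0 := by
      rw [hPnode 0 (Finset.mem_insert_self 0 _), if_neg (Ne.symm hμ0)]
    obtain ⟨Q, hQ⟩ : Polynomial.X ∣ P :=
      Polynomial.X_dvd_iff.mpr (by rw [Polynomial.coeff_zero_eq_eval_zero]; exact hP0)
    set e : (Bic b) := Polynomial.aeval β P with hedef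
    set VP : ℂ[X] := Polynomial.C 4 * (P * P - P) with hVPdef
    set v : (Bic b) := Polynomial.aeval β VP with hvdef
    have hv48 : v = 4 * (e * e - e) := by
      rw [hvdef, hedef, map_mul, map_sub, map_mul, Polynomial.aeval_C]
      rw [map_ofNat]
    -- spectrum of v
    have hφβ : ∀ φ : characterSpace ℂ (Bic b), (φ β) ∈ spectrum ℂ b := by
      intro φ
      have := AlgHom.apply_mem_spectrum φ β
      rwa [hspecβ] at this
    have hvchar : ∀ φ : characterSpace ℂ (Bic b), φ v = 0 := by
      intro φ
      have h1 : φ v = Polynomial.eval (φ β) VP := by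
        rw [hvdef, ← Polynomial.aeval_algHom_apply φ β VP, Polynomial.coe_aeval_eq_eval]
      rw [h1, hVPdef]
      simp only [Polynomial.eval_mul, Polynomial.eval_sub, Polynomial.eval_C]
      have := hPnode (φ β) (hsubT (hφβ φ))
      rw [this]
      by_cases hc : φ β = μ <;> simp [hc]
    have hechar : ∀ φ : characterSpace ℂ (Bic b), φ e = if φ β = μ then 1 else 0 := by
      intro φ
      have h1 : φ e = Polynomial.eval (φ β) P := by
        rw [hedef, ← Polynomial.aeval_algHom_apply φ β P, Polynomial.coe_aeval_eq_eval]
      rw [h1, hPnode (φ β) (hsubT (hφβ φ))]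
    have hv_spec : spectrum ℂ v ⊆ {0} := by
      intro z hz
      obtain ⟨φ, hφ⟩ := WeakDual.CharacterSpace.mem_spectrum_iff_exists.mp hz
      rw [← hφ, hvchar φ]
      rfl
    -- summability
    have hρ : spectralRadius ℂ v = 0 := by
      refine le_antisymm ?_ zero_le
      rw [spectralRadius]
      refine iSup₂_le fun k hk => ?_
      have hk0 : k = 0 := hv_spec hk
      simp [hk0]
    have htend := spectrum.pow_nnnorm_pow_one_div_tendsto_nhds_spectralRadius v
    rw [hρ] at htend
    have hsmall : ∀ᶠ (n : ℕ) in Filter.atTop,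
        ((‖v ^ n‖₊ : ℝ≥0∞)) ^ (1 / (n:ℝ)) < 2⁻¹ :=
      htend.eventually_lt_const (by norm_num)
    have hbound : ∀ᶠ n in Filter.atTop, ‖v ^ n‖ ≤ (2⁻¹ : ℝ)^n := by
      filter_upwards [hsmall, Filter.eventually_ge_atTop 1] with n hn hn1
      have hne : ((n:ℝ)) ≠ 0 := by positivity
      have e0 : (((‖v ^ n‖₊ : ℝ≥0∞)) ^ (1/(n:ℝ))) ^ (n:ℝ) = (‖v ^ n‖₊ : ℝ≥0∞) := by
        rw [← ENNReal.rpow_mul, one_div, inv_mul_cancel₀ hne, ENNReal.rpow_one]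
      have h1 : (‖v ^ n‖₊ : ℝ≥0∞) ≤ (2⁻¹ : ℝ≥0∞) ^ (n:ℝ) := by
        rw [← e0]
        exact ENNReal.rpow_le_rpow hn.le (Nat.cast_nonneg n)
      rw [ENNReal.rpow_natCast] at h1
      have h2 : ((2⁻¹ : ℝ≥0∞)) = (((2⁻¹ : ℝ≥0)) : ℝ≥0∞) := by
        simp
      rw [h2, ← ENNReal.coe_pow, ENNReal.coe_le_coe] at h1
      calc ‖v ^ n‖ = ((‖v ^ n‖₊ : ℝ≥0) : ℝ) := rfl
        _ ≤ (((2⁻¹:ℝ≥0)^n : ℝ≥0) : ℝ) := by exact_mod_cast h1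
        _ = (2⁻¹:ℝ)^n := by push_cast; ring
    have hsummable : ∀ d : ℕ → ℂ, (∀ n, ‖d n‖ ≤ 1) →
        Summable (fun n => ‖d n • v ^ n‖) := by
      intro d hd
      apply Summable.of_norm_bounded_eventually (g := fun n => (2⁻¹:ℝ)^n)
        (summable_geometric_of_lt_one (by norm_num) (by norm_num))
      rw [Nat.cofinite_eq_atTop]
      filter_upwards [hbound] with n hn
      rw [Real.norm_eq_abs, abs_of_nonneg (norm_nonneg _), norm_smul]
      calc ‖d n‖ * ‖v ^ n‖ ≤ 1 * ‖v ^ n‖ :=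
          mul_le_mul_of_nonneg_right (hd n) (norm_nonneg _)
        _ = ‖v ^ n‖ := one_mul _
        _ ≤ (2⁻¹:ℝ)^n := hn
    have hsumf : Summable (fun n => bc n • v ^ n) :=
      (hsummable bc bc_norm_le_one).of_norm
    have hsumf' : Summable (fun n => bc (n+1) • v ^ n) :=
      (hsummable (fun n => bc (n+1)) (fun n => bc_norm_le_one (n+1))).of_norm
    set s : (Bic b) := ∑' n, bc n • v ^ n with hsdef
    set m : (Bic b) := ∑' n, bc (n+1) • v ^ n with hmdef
    -- Cauchy product
    have hss : s * s = 1 + v := by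
      rw [hsdef]
      rw [tsum_mul_tsum_eq_tsum_sum_antidiagonal_of_summable_norm
        (hsummable bc bc_norm_le_one) (hsummable bc bc_norm_le_one)]
      have hterm : ∀ n, (∑ kl ∈ Finset.HasAntidiagonal.antidiagonal n,
          (bc kl.1 • v ^ kl.1) * (bc kl.2 • v ^ kl.2)) = Sconv n • v ^ n := by
        intro n
        rw [Finset.Nat.sum_antidiagonal_eq_sum_range_succ_mk, Sconv, Finset.sum_smul]
        apply Finset.sum_congr rfl
        intro k hk
        rw [Finset.mem_range] at hk
        rw [smul_mul_smul_comm, ← pow_add, Nat.add_sub_cancel' (Nat.lt_succ_iff.mp hk)]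
      rw [tsum_congr hterm]
      have hfun : ∀ n, Sconv n • v ^ n
          = (if n = 0 then (1:ℂ) else if n = 1 then 1 else 0) • v ^ n := by
        intro n; rw [Sconv_val]
      rw [tsum_congr hfun]
      rw [tsum_eq_sum (s := ({0, 1} : Finset ℕ)) (by
        intro n hn
        simp only [Finset.mem_insert, Finset.mem_singleton, not_or] at hn
        rw [if_neg hn.1, if_neg hn.2, zero_smul])]
      rw [Finset.sum_insert (by norm_num), Finset.sum_singleton]
      norm_num
    -- invert 1 + v
    have hinv : IsUnit ((1:(Bic b)) + v) := by
      have h1 : (-1 : ℂ) ∉ spectrum ℂ v := by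
        intro hc
        have := hv_spec hc
        norm_num at this
      rw [spectrum.notMem_iff] at h1
      have h2 : algebraMap ℂ (Bic b) (-1) - v = -(1 + v) := by
        rw [map_neg, map_one]; ring
      rw [h2] at h1
      have := h1.neg
      rwa [neg_neg] at this
    set i : (Bic b) := ((hinv.unit⁻¹ : (Bic b)ˣ) : (Bic b)) with hidef
    have hi1 : (1 + v) * i = 1 := hinv.mul_val_inv
    have hi2 : i * (1 + v) = 1 := hinv.val_inv_mul
    set u : (Bic b) := (1 - 2*e) * s * i with hudef
    have hsq : (1 - 2*e) * (1 - 2*e) = 1 + v := by rw [hv48]; ring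
    have hu2 : u * u = 1 := by
      have h1 : u * u = ((1 - 2*e)*(1 - 2*e)) * (s*s) * (i*i) := by rw [hudef]; ring
      rw [h1, hsq, hss]
      calc (1+v) * (1+v) * (i*i) = ((1+v)*i) * ((1+v)*i) := by ring
        _ = 1 := by rw [hi1, one_mul]
    set c2 : (Bic b) := algebraMap ℂ (Bic b) 2⁻¹ with hc2def
    have hc2 : c2 * 2 = 1 := by
      rw [hc2def, show ((2:(Bic b))) = algebraMap ℂ (Bic b) 2 from (map_ofNat _ 2).symm,
        ← map_mul]
      norm_num
    set q : (Bic b) := c2 * (1 - u) with hqdef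
    have hqq : q * q = q := by
      have h1u : (1 - u) * (1 - u) = 2 * (1 - u) := by
        calc (1-u)*(1-u) = 1 - 2*u + u*u := by ring
          _ = 2*(1 - u) := by rw [hu2]; ring
      calc q*q = (c2 * (c2 * 2)) * (1-u) := by rw [hqdef]; rw [mul_mul_mul_comm]; rw [h1u]; ring
        _ = c2 * (1 - u) := by rw [hc2, mul_one]
    -- q = β * H
    have hsm : s = 1 + v * m := by
      rw [hsdef, Summable.tsum_eq_zero_add hsumf]
      congr 1
      · simp [bc_zero]
      · rw [show (fun n => bc (n+1) • v^(n+1)) = (fun n => v * (bc (n+1) • v^n)) from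
          funext fun n => by rw [mul_smul_comm, ← pow_succ']]
        rw [Summable.tsum_mul_left v hsumf', hmdef]
    -- characters of s, i, q
    have hschar : ∀ φ : characterSpace ℂ (Bic b), φ s = 1 := by
      intro φ
      have hmain : φ s = ∑' n, φ (bc n • v ^ n) := by
        rw [hsdef]
        exact ContinuousLinearMap.map_tsum (CharacterSpace.toCLM φ) hsumf
      rw [hmain,
        show (fun n => φ (bc n • v ^ n)) = (fun n => bc n * (φ v)^n) from
          funext fun n => by rw [map_smul, map_pow, smul_eq_mul],
        hvchar φ, tsum_eq_single 0 (fun n hn => by rw [zero_pow hn, mul_zero])]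
      simp [bc_zero]
    have hichar : ∀ φ : characterSpace ℂ (Bic b), φ i = 1 := by
      intro φ
      have h1 : φ i * φ (1 + v) = 1 := by rw [← map_mul, hi2, map_one]
      rw [map_add, map_one, hvchar φ, add_zero, mul_one] at h1
      exact h1
    have hqchar : ∀ φ : characterSpace ℂ (Bic b), φ q = if φ β = μ then 1 else 0 := by
      intro φ
      have hc2' : φ c2 = 2⁻¹ := AlgHomClass.commutes φ 2⁻¹
      rw [hqdef, hudef]
      simp only [map_mul, map_sub, map_one, map_ofNat, hschar φ, hichar φ, hechar φ, hc2']
      by_cases hc : φ β = μ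
      · simp [hc]
      · simp [hc]
    -- q = β * H
    have hH : ∃ H : (Bic b), q = β * H := by
      set eQ : (Bic b) := Polynomial.aeval β Q with heQdef
      have he : e = β * eQ := by rw [hedef, hQ, map_mul, Polynomial.aeval_X]
      have hv' : v = β * (4 * (eQ * e - eQ)) := by rw [hv48, he]; ring
      have hkey : (1:(Bic b)) - u = i * (2*e + v*(1 - (1-2*e)*m)) := by
        calc (1:(Bic b)) - u = i*(1+v) - (1-2*e)*(1 + v*m)*i := by
              rw [hi2, ← hsm, hudef]
          _ = i * ((1+v) - (1-2*e)*(1+v*m)) := by ring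
          _ = i * (2*e + v*(1 - (1-2*e)*m)) := by ring
      refine ⟨c2 * i * (2*eQ + (4*(eQ*e - eQ))*(1 - (1-2*e)*m)), ?_⟩
      rw [hqdef, hkey, hv', he]
      ring
    exact ⟨q, hH, hqq, hqchar⟩
  -- choose and package
  choose qf hq1 hq2 hq3 using claim
  refine ⟨fun μ => if hμ : μ ∈ spectrum ℂ b \ {0} then ((qf μ hμ : (Bic b)) : A) else 0, ?_⟩
  intro μ hμ
  simp only [dif_pos hμ]
  have hspecμ : ∀ {ν : ℂ}, ν ∈ spectrum ℂ b \ {0} → ν ∈ spectrum ℂ β := by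
    intro ν hν
    rw [hspecβ]
    exact hν.1
  refine ⟨?_, ?_, ?_, ?_⟩
  · obtain ⟨h, hh⟩ := hq1 μ hμ
    refine ⟨(h : A), ?_⟩
    rw [hh]
    rfl
  · have h2 := congrArg (Subtype.val) (hq2 μ hμ)
    exact h2
  · obtain ⟨φ, hφ⟩ := WeakDual.CharacterSpace.mem_spectrum_iff_exists.mp (hspecμ hμ)
    intro hc
    have h0 : qf μ hμ = 0 := Subtype.ext (by simpa using hc)
    have h1 := hq3 μ hμ φ
    rw [h0, map_zero, hφ, if_pos rfl] at h1
    exact one_ne_zero h1.symm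
  · intro ν hν hνμ
    simp only [dif_pos hν]
    have hg : qf μ hμ * qf ν hν = 0 := by
      set g := qf μ hμ * qf ν hν with hgdef
      have hgchar : ∀ φ : characterSpace ℂ (Bic b), φ g = 0 := by
        intro φ
        rw [hgdef, map_mul, hq3 μ hμ φ, hq3 ν hν φ]
        by_cases hc : φ β = μ
        · rw [if_pos hc, if_neg (fun h => hνμ (h.symm.trans hc)), mul_zero]
        · rw [if_neg hc, zero_mul]
      have hgspec : spectrum ℂ g ⊆ {0} := fun z hz => by
        obtain ⟨φ, hφ⟩ := WeakDual.CharacterSpace.mem_spectrum_iff_exists.mp hz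
        rw [← hφ, hgchar φ]
        rfl
      have hgidem : g * g = g := by
        rw [hgdef]
        calc (qf μ hμ * qf ν hν) * (qf μ hμ * qf ν hν)
            = (qf μ hμ * qf μ hμ) * (qf ν hν * qf ν hν) := by ring
          _ = qf μ hμ * qf ν hν := by rw [hq2 μ hμ, hq2 ν hν]
      by_contra hgne
      have h1 := one_mem_spec_idem hgidem hgne
      have h2 := hgspec h1
      norm_num at h2
    calc (↑(qf μ hμ) : A) * (↑(qf ν hν) : A) = ((qf μ hμ * qf ν hν : (Bic b)) : A) := rfl
      _ = 0 := by rw [hg]; rfl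
end Machine
end ASZ

namespace ASZ
section Final
variable {A : Type*} [NormedRing A] [NormedAlgebra ℂ A] [CompleteSpace A]

lemma natCast_add_one_ne_top (n : ℕ) : ((n : ℕ∞) + 1) ≠ ⊤ := by
  rw [show ((n:ℕ∞) + 1) = ((n+1:ℕ):ℕ∞) by push_cast; ring]
  exact ENat.coe_ne_top _

lemma idem_rank_le_one_zero {p : A} (hp : p * p = p) (h1 : sRank p ≤ 1)
    (hx : ∀ c : A, sRank c ≤ 1 → p * c = 0) : p = 0 := by
  have h2 := hx p h1
  rw [hp] at h2
  exact h2

lemma Qind [Nontrivial A] (n : ℕ) :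
    ∀ p : A, p * p = p → sRank p ≤ (n : ℕ∞) →
      (∀ c : A, sRank c ≤ 1 → p * c = 0) → p = 0 := by
  induction n with
  | zero =>
    intro p hp hr hx
    exact idem_rank_le_one_zero hp (le_trans hr (by norm_num)) hx
  | succ n ih =>
    intro p hp hr hx
    have hr' : sRank p ≤ (n : ℕ∞) + 1 := by
      rw [show ((n : ℕ∞) + 1) = ((n+1 : ℕ) : ℕ∞) by push_cast; ring]
      exact hr
    by_cases h1 : sRank p ≤ 1
    · exact idem_rank_le_one_zero hp h1 hx
    · exfalso
      have h2 : ∃ z : A, 1 < ((spectrum ℂ (z * p)) \ {0}).encard := by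
        by_contra hc
        push_neg at hc
        exact h1 (iSup_le fun z => hc z)
      obtain ⟨z, hz⟩ := h2
      have hswap : spectrum ℂ (p * z) \ {0} = spectrum ℂ (z * p) \ {0} := spec_diff_swap p z
      have hfin : (spectrum ℂ (p * z) \ {0}).Finite := by
        rw [hswap]
        have hle := (encard_le_sRank z p).trans hr'
        exact Set.encard_ne_top_iff.mp (ne_top_of_le_ne_top (natCast_add_one_ne_top n) hle)
      have hz' : 1 < ((spectrum ℂ (p * z)) \ {0}).encard := by rw [hswap]; exact hz
      obtain ⟨μ₁, μ₂, hμ₁, hμ₂, hμne⟩ := Set.one_lt_encard_iff.mp hz'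
      obtain ⟨F, hF⟩ := machine (p * z) hfin
      obtain ⟨⟨h₁, hh₁⟩, hidem₁, hne₁, horth₁⟩ := hF μ₁ hμ₁
      obtain ⟨⟨h₂, hh₂⟩, hidem₂, hne₂, horth₂⟩ := hF μ₂ hμ₂
      have ho12 : F μ₁ * F μ₂ = 0 := horth₁ μ₂ hμ₂ (Ne.symm hμne)
      have ho21 : F μ₂ * F μ₁ = 0 := horth₂ μ₁ hμ₁ hμne
      have hinh : ∀ c : A, sRank c ≤ 1 → F μ₁ * c = 0 := by
        intro c hc
        have he : F μ₁ * c = p * (z * (h₁ * c)) := by rw [hh₁]; noncomm_ring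
        rw [he]
        exact hx _ ((sRank_mul_left (h₁ * c) z).trans ((sRank_mul_left c h₁).trans hc))
      have hsum_le : sRank (F μ₁ + F μ₂) ≤ (n : ℕ∞) + 1 := by
        have he : F μ₁ + F μ₂ = p * (z * h₁ + z * h₂) := by rw [hh₁, hh₂]; noncomm_ring
        rw [he]
        exact (sRank_mul_right p _).trans hr'
      have hF1_le : sRank (F μ₁) ≤ (n : ℕ∞) + 1 := by
        rw [hh₁]
        exact (sRank_mul_right (p * z) h₁).trans ((sRank_mul_right p z).trans hr')
      have hrank1 : sRank (F μ₁) ≤ (n : ℕ∞) := by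
        refine iSup_le fun w => ?_
        have hfin1 : (spectrum ℂ (w * F μ₁) \ {0}).Finite := by
          have hle := (encard_le_sRank w (F μ₁)).trans hF1_le
          exact Set.encard_ne_top_iff.mp (ne_top_of_le_ne_top (natCast_add_one_ne_top n) hle)
        have hsup := (superadd hidem₁ hidem₂ ho12 ho21 hne₂ hfin1).trans hsum_le
        exact (WithTop.add_le_add_iff_right (by simp : (1:ℕ∞) ≠ ⊤)).mp hsup
      exact hne₁ (ih (F μ₁) hidem₁ hrank1 hinh)

lemma key [Nontrivial A] (x : A) (hx1 : ∀ c : A, sRank c ≤ 1 → x * c = 0)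
    (v : A) (hv : sRank (x * v) ≠ ⊤) : spectrum ℂ (x * v) ⊆ {0} := by
  intro μ hμ
  by_contra hμ0
  rw [Set.mem_singleton_iff] at hμ0
  obtain ⟨m, hm⟩ := WithTop.ne_top_iff_exists.mp hv
  have hfin : (spectrum ℂ (x * v) \ {0}).Finite := by
    have hle := encard_self_le_sRank (x * v)
    rw [← hm] at hle
    exact Set.encard_ne_top_iff.mp (ne_top_of_le_ne_top (ENat.coe_ne_top m) hle)
  obtain ⟨F, hF⟩ := machine (x * v) hfin
  obtain ⟨⟨h, hh⟩, hidem, hne, -⟩ := hF μ ⟨hμ, hμ0⟩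
  apply hne
  refine Qind m (F μ) hidem ?_ ?_
  · rw [hh]
    exact le_of_le_of_eq (sRank_mul_right (x * v) h) hm.symm
  · intro c hc
    have he : F μ * c = x * (v * (h * c)) := by rw [hh]; noncomm_ring
    rw [he]
    exact hx1 _ ((sRank_mul_left (h * c) v).trans ((sRank_mul_left c h).trans hc))

lemma base (x : A) (hA : Ideal.jacobson (⊥ : Ideal A) = ⊥)
    (h : ∀ a : A, sRank a ≤ 1 → trOne (x * a) = 0) :
    ∀ c : A, sRank c ≤ 1 → x * c = 0 := by
  have step1 : ∀ a : A, sRank a ≤ 1 → spectrum ℂ (x * a) ⊆ {0} := by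
    intro a ha μ hμ
    by_contra hμ0
    rw [Set.mem_singleton_iff] at hμ0
    have hmem : μ ∈ spectrum ℂ (x * a) \ {0} := ⟨hμ, hμ0⟩
    have hcard : ((spectrum ℂ (x * a)) \ {0}).encard ≤ 1 := (encard_le_sRank x a).trans ha
    have hex : ∃ ρ : ℂ, spectrum ℂ (x * a) \ {0} = {ρ} := by
      rcases Set.encard_le_one_iff_eq.mp hcard with he | he
      · rw [he] at hmem
        exact absurd hmem (Set.notMem_empty μ)
      · exact he
    have h0 := h a ha
    rw [trOne, dif_pos hex] at h0
    have hch := hex.choose_spec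
    rw [h0] at hch
    rw [hch] at hmem
    exact hμ0 hmem
  intro c hc
  apply rad_zero hA
  intro y
  rw [mul_assoc]
  exact step1 (c * y) ((sRank_mul_right c y).trans hc)

end Final
end ASZ


theorem annihilates_socle_of_trace_zero {A : Type*} [NormedRing A]
    [NormedAlgebra ℂ A] [CompleteSpace A]
    (hA : Ideal.jacobson (⊥ : Ideal A) = ⊥) (x : A)
    (h : ∀ a : A, sRank a ≤ 1 → trOne (x * a) = 0) :
    (∀ a ∈ socle A, x * a = 0) ∧ (x ∈ socle A → x = 0) := by
  rcases subsingleton_or_nontrivial A with hS | hN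
  · exact ⟨fun a _ => Subsingleton.elim _ _, fun _ => Subsingleton.elim _ _⟩
  · have hx1 := ASZ.base x hA h
    constructor
    · intro a ha
      have ha' : sRank a ≠ ⊤ := ha
      apply ASZ.rad_zero hA
      intro y
      rw [mul_assoc]
      apply ASZ.key x hx1 (a * y)
      intro hc
      apply ha'
      have hle := (ASZ.sRank_mul_left (a * y) x).trans (ASZ.sRank_mul_right a y)
      rw [hc] at hle
      exact top_le_iff.mp hle
    · intro hxs
      have hxs' : sRank x ≠ ⊤ := hxs
      apply ASZ.rad_zero hA
      intro y
      apply ASZ.key x hx1 y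
      intro hc
      apply hxs'
      have hle := ASZ.sRank_mul_right x y
      rw [hc] at hle
      exact top_le_iff.mp hle
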